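/- For any real α, any real β, and any positive integer N, the discrepancy satisfies D_{α,β}(N) ≤ 8·D_{α,0}(N). -/

import Mathlib

attribute [local instance] Classical.propDecidable

noncomputable def D (α β : ℝ) (N : ℕ) : ℝ :=
  sSup {d : ℝ | ∃ x y : ℝ, 0 ≤ x ∧ x < y ∧ y < 1 ∧
    d = |(((Finset.Icc 1 N).filter
            (fun n : ℕ => Int.fract ((n : ℝ) * α + β) ∈ Set.Ico x y)).card : ℝ) / N
          - (y - x)|}

namespace DiscAux

def Dset (α β : ℝ) (N : ℕ) : Set ℝ :=
  {d : ℝ | ∃ x y : ℝ, 0 ≤ x ∧ x < y ∧ y < 1 ∧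
    d = |(((Finset.Icc 1 N).filter
            (fun n : ℕ => Int.fract ((n : ℝ) * α + β) ∈ Set.Ico x y)).card : ℝ) / N
          - (y - x)|}

lemma D_eq (α β : ℝ) (N : ℕ) : D α β N = sSup (Dset α β N) := rfl

noncomputable def cnt (α : ℝ) (N : ℕ) (a b : ℝ) : ℕ :=
  ((Finset.Icc 1 N).filter
      (fun n : ℕ => Int.fract ((n : ℝ) * α + 0) ∈ Set.Ico a b)).card

lemma bddAbove_Dset (α β : ℝ) (N : ℕ) : BddAbove (Dset α β N) := by
  refine ⟨2, fun d hd => ?_⟩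
  obtain ⟨x, y, hx, hxy, hy, rfl⟩ := hd
  set c := (((Finset.Icc 1 N).filter
      (fun n : ℕ => Int.fract ((n : ℝ) * α + β) ∈ Set.Ico x y)).card : ℝ) with hc_def
  have hcN : c ≤ N := by
    have h1 := Finset.card_filter_le (Finset.Icc 1 N)
      (fun n : ℕ => Int.fract ((n : ℝ) * α + β) ∈ Set.Ico x y)
    have h2 : (Finset.Icc 1 N).card ≤ N := by simp
    rw [hc_def]
    exact_mod_cast le_trans h1 h2
  have hc0 : 0 ≤ c := by positivity
  rcases Nat.eq_zero_or_pos N with h | h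
  · subst h; simp; rw [abs_le]; constructor <;> nlinarith
  · have hN : (0:ℝ) < N := by exact_mod_cast h
    have h1 : c / N ≤ 1 := by rw [div_le_one hN]; exact hcN
    have h2 : 0 ≤ c / N := by positivity
    rw [abs_le]; constructor <;> nlinarith

lemma D_nonneg (α β : ℝ) (N : ℕ) : 0 ≤ D α β N := by
  rw [D_eq]
  apply Real.sSup_nonneg
  rintro d ⟨x, y, hx, hxy, hy, rfl⟩
  exact abs_nonneg _

lemma le_D (α : ℝ) (N : ℕ) {d : ℝ} (hd : d ∈ Dset α 0 N) : d ≤ D α 0 N :=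
  le_csSup (bddAbove_Dset α 0 N) hd

lemma min_shift (u : ℝ) : min (u + 1) 1 = min u 0 + 1 := by
  rcases le_total u 0 with h | h
  · rw [min_eq_left (by linarith), min_eq_left h]
  · rw [min_eq_right (by linarith), min_eq_right h]; norm_num

lemma fract_mem (t : ℝ) : Int.fract t ∈ Set.Ico (0:ℝ) 1 :=
  ⟨Int.fract_nonneg t, Int.fract_lt_one t⟩

/-- Key counting bound for closed-parameter intervals. -/
lemma cnt_bound (α : ℝ) (N : ℕ) (hN : 0 < N) (a b : ℝ)
    (h0 : 0 ≤ a) (hab : a ≤ b) (hb1 : b ≤ 1) :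
    |(cnt α N a b : ℝ) / N - (b - a)| ≤ D α 0 N := by
  have hNR : (0:ℝ) < N := by exact_mod_cast hN
  rcases eq_or_lt_of_le hab with rfl | hab'
  · have : cnt α N a a = 0 := by
      unfold cnt
      rw [Finset.card_eq_zero, Finset.filter_eq_empty_iff]
      intro n _
      simp [Set.mem_Ico]
    rw [this]
    simpa using D_nonneg α 0 N
  rcases lt_or_eq_of_le hb1 with hb1' | rfl
  · -- a < b < 1 : direct element of the sup set
    apply le_D
    exact ⟨a, b, h0, hab', hb1', rfl⟩
  · -- b = 1
    rcases eq_or_lt_of_le h0 with rfl | ha'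
    · -- a = 0, b = 1 : full count
      have : cnt α N 0 1 = N := by
        unfold cnt
        rw [Finset.filter_true_of_mem, Nat.card_Icc]
        · omega
        · intro n _; exact fract_mem _
      rw [this]
      have : (N:ℝ)/N - (1 - 0) = 0 := by field_simp; norm_num
      rw [this]
      simpa using D_nonneg α 0 N
    · -- 0 < a < 1 : complement trick
      have hsplit : cnt α N 0 a + cnt α N a 1 = N := by
        unfold cnt
        have h1 : ((Finset.Icc 1 N).filter
            (fun n : ℕ => Int.fract ((n : ℝ) * α + 0) ∈ Set.Ico a 1))
            = ((Finset.Icc 1 N).filter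
            (fun n : ℕ => ¬ (Int.fract ((n : ℝ) * α + 0) ∈ Set.Ico (0:ℝ) a))) := by
          apply Finset.filter_congr
          intro n _
          have h := fract_mem ((n:ℝ) * α + 0)
          simp only [Set.mem_Ico] at h ⊢
          constructor
          · intro ⟨h1, h2⟩ ⟨h3, h4⟩; linarith
          · intro h'
            refine ⟨?_, h.2⟩
            by_contra hc
            exact h' ⟨h.1, by linarith⟩
        rw [h1, Finset.card_filter_add_card_filter_not, Nat.card_Icc]
        omega
      have hmem : |(cnt α N 0 a : ℝ) / N - (a - 0)| ≤ D α 0 N := by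
        apply le_D
        exact ⟨0, a, le_refl 0, ha', hab', rfl⟩
      have hcast : (cnt α N a 1 : ℝ) = N - cnt α N 0 a := by
        have h := hsplit
        have h2 : (cnt α N 0 a : ℝ) + (cnt α N a 1 : ℝ) = N := by exact_mod_cast congrArg (fun k : ℕ => (k : ℝ)) h
        linarith
      rw [hcast]
      have : ((N:ℝ) - cnt α N 0 a) / N - (1 - a) = -((cnt α N 0 a : ℝ)/N - (a - 0)) := by
        field_simp; ring
      rw [this, abs_neg]
      exact hmem

/-- pointwise membership splitting -/
lemma mem_split (α β x y : ℝ) (hx : 0 ≤ x) (hy : y < 1) (n : ℕ) :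
    (Int.fract ((n:ℝ) * α + β) ∈ Set.Ico x y) ↔
      (Int.fract ((n:ℝ) * α + 0) ∈
          Set.Ico (max (x - Int.fract β) 0) (max (y - Int.fract β) 0) ∨
       Int.fract ((n:ℝ) * α + 0) ∈
          Set.Ico (min (x + 1 - Int.fract β) 1) (min (y + 1 - Int.fract β) 1)) := by
  set t := Int.fract ((n:ℝ) * α) with ht_def
  set b0 := Int.fract β with hb0_def
  have ht : 0 ≤ t ∧ t < 1 := ⟨Int.fract_nonneg _, Int.fract_lt_one _⟩
  have hb : 0 ≤ b0 ∧ b0 < 1 := ⟨Int.fract_nonneg _, Int.fract_lt_one _⟩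
  have key : Int.fract ((n:ℝ) * α + β) = Int.fract (t + b0) := by
    have h1 : (n:ℝ) * α + β = (t + b0) + ((⌊(n:ℝ)*α⌋ + ⌊β⌋ : ℤ)) := by
      rw [ht_def, hb0_def]
      unfold Int.fract
      push_cast
      ring
    rw [h1, Int.fract_add_intCast]
  have h40 : Int.fract ((n:ℝ) * α + 0) = t := by rw [add_zero]
  rw [key, h40]
  by_cases h : t + b0 < 1
  · have hf : Int.fract (t + b0) = t + b0 :=
      Int.fract_eq_self.mpr ⟨by linarith [ht.1, hb.1], h⟩
    rw [hf]
    simp only [Set.mem_Ico, max_le_iff, lt_max_iff, le_min_iff, min_le_iff, lt_min_iff]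
    constructor
    · rintro ⟨h1, h2⟩
      left
      exact ⟨⟨by linarith, ht.1⟩, Or.inl (by linarith)⟩
    · rintro (⟨⟨h1, _⟩, h2⟩ | ⟨(h1 | h1), h2, h3⟩)
      · rcases h2 with h2 | h2
        · exact ⟨by linarith, by linarith⟩
        · linarith [ht.1]
      · constructor <;> linarith
      · linarith [ht.2]
  · push_neg at h
    have hf : Int.fract (t + b0) = t + b0 - 1 := by
      have : Int.fract (t + b0) = Int.fract ((t + b0 - 1) + (1:ℤ)) := by norm_num
      rw [this, Int.fract_add_intCast]
      exact Int.fract_eq_self.mpr ⟨by linarith, by linarith [ht.2, hb.2]⟩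
    rw [hf]
    simp only [Set.mem_Ico, max_le_iff, lt_max_iff, le_min_iff, min_le_iff, lt_min_iff]
    constructor
    · rintro ⟨h1, h2⟩
      right
      exact ⟨Or.inl (by linarith), by linarith, ht.2⟩
    · rintro (⟨⟨h1, _⟩, h2⟩ | ⟨(h1 | h1), h2, h3⟩)
      · rcases h2 with h2 | h2
        · linarith
        · linarith [ht.1]
      · constructor <;> linarith
      · linarith [ht.2]

theorem main (α β : ℝ) (N : ℕ) (hN : 0 < N) :
    D α β N ≤ 8 * D α 0 N := by
  have hNR : (0:ℝ) < N := by exact_mod_cast hN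
  rw [D_eq α β N]
  apply Real.sSup_le
  · rintro d ⟨x, y, hx, hxy, hy, rfl⟩
    set b0 := Int.fract β with hb0_def
    have hb : 0 ≤ b0 ∧ b0 < 1 := ⟨Int.fract_nonneg _, Int.fract_lt_one _⟩
    set a₁ := max (x - b0) 0 with ha1
    set c₁ := max (y - b0) 0 with hc1
    set a₂ := min (x + 1 - b0) 1 with ha2
    set c₂ := min (y + 1 - b0) 1 with hc2
    have hsplit : ((Finset.Icc 1 N).filter
        (fun n : ℕ => Int.fract ((n : ℝ) * α + β) ∈ Set.Ico x y)).card
        = cnt α N a₁ c₁ + cnt α N a₂ c₂ := by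
      have hfe : ((Finset.Icc 1 N).filter
          (fun n : ℕ => Int.fract ((n : ℝ) * α + β) ∈ Set.Ico x y))
          = ((Finset.Icc 1 N).filter
              (fun n : ℕ => Int.fract ((n : ℝ) * α + 0) ∈ Set.Ico a₁ c₁))
            ∪ ((Finset.Icc 1 N).filter
              (fun n : ℕ => Int.fract ((n : ℝ) * α + 0) ∈ Set.Ico a₂ c₂)) := by
        rw [← Finset.filter_or]
        apply Finset.filter_congr
        intro n _
        exact mem_split α β x y hx hy n
      rw [hfe]
      rw [Finset.card_union_of_disjoint]
      · rfl
      · rw [Finset.disjoint_filter]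
        intro n _ h1 h2
        simp only [Set.mem_Ico] at h1 h2
        have hle : c₁ ≤ a₂ := by
          apply max_le
          · apply le_min <;> linarith
          · apply le_min <;> linarith
        linarith [h1.2, h2.1]
    have hlen : (c₁ - a₁) + (c₂ - a₂) = y - x := by
      have e1 : max (x - b0) 0 + min (x - b0) 0 = x - b0 := by
        simpa using max_add_min (x - b0) 0
      have e2 : max (y - b0) 0 + min (y - b0) 0 = y - b0 := by
        simpa using max_add_min (y - b0) 0
      have e3 : a₂ = min (x - b0) 0 + 1 := by
        rw [ha2, show x + 1 - b0 = (x - b0) + 1 by ring, min_shift]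
      have e4 : c₂ = min (y - b0) 0 + 1 := by
        rw [hc2, show y + 1 - b0 = (y - b0) + 1 by ring, min_shift]
      rw [ha1, hc1, e3, e4]
      linarith
    have hb1 : |(cnt α N a₁ c₁ : ℝ) / N - (c₁ - a₁)| ≤ D α 0 N := by
      apply cnt_bound α N hN
      · exact le_max_right _ _
      · exact max_le_max (by linarith) le_rfl
      · apply max_le <;> linarith
    have hb2 : |(cnt α N a₂ c₂ : ℝ) / N - (c₂ - a₂)| ≤ D α 0 N := by
      apply cnt_bound α N hN
      · apply le_min <;> linarith
      · exact min_le_min (by linarith) le_rfl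
      · exact min_le_right _ _
    have hcast : (((Finset.Icc 1 N).filter
        (fun n : ℕ => Int.fract ((n : ℝ) * α + β) ∈ Set.Ico x y)).card : ℝ)
        = (cnt α N a₁ c₁ : ℝ) + (cnt α N a₂ c₂ : ℝ) := by
      rw [hsplit]; push_cast; ring
    rw [hcast, ← hlen]
    have hrw : ((cnt α N a₁ c₁ : ℝ) + cnt α N a₂ c₂) / N - ((c₁ - a₁) + (c₂ - a₂))
        = ((cnt α N a₁ c₁ : ℝ) / N - (c₁ - a₁)) + ((cnt α N a₂ c₂ : ℝ) / N - (c₂ - a₂)) := by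
      field_simp
      ring
    rw [hrw]
    calc |((cnt α N a₁ c₁ : ℝ) / N - (c₁ - a₁)) + ((cnt α N a₂ c₂ : ℝ) / N - (c₂ - a₂))|
        ≤ |(cnt α N a₁ c₁ : ℝ) / N - (c₁ - a₁)| + |(cnt α N a₂ c₂ : ℝ) / N - (c₂ - a₂)| :=
          abs_add_le _ _
      _ ≤ 8 * D α 0 N := by linarith [D_nonneg α 0 N]
  · have := D_nonneg α 0 N
    linarith

end DiscAux

theorem discrepancy_shift_bound (α β : ℝ) (N : ℕ) (hN : 0 < N) :
    D α β N ≤ 8 * D α 0 N := by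
  exact DiscAux.main α β N hN
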